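/- arXiv:1910.05251 — 3 statements merged into one kernel-verified Lean document; each statement's English description precedes it below -/
import Mathlib

section
/- Let L : ℝ[x₁,…,x_d] → ℝ be linear and nonnegative on squares, q a polynomial, and ν a finite positive Borel measure on a compact set K with L(qf) = ∫_K f dν for all polynomials f. Then for every f ∈ ℝ[x₁,…,x_d] and every ψ ∈ L²(ν): (∫_K f·ψ dν)² ≤ (∫_K q·ψ² dν)·L(f²). -/
open MeasureTheory MvPolynomial Filter
open scoped ENNReal

lemma linmap_cauchy_schwarz {R : Type*} [CommRing R] [Algebra ℝ R]
    (L : R →ₗ[ℝ] ℝ) (hL : ∀ p : R, 0 ≤ L (p ^ 2)) (x y : R) :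
    L (x * y) ^ 2 ≤ L (x ^ 2) * L (y ^ 2) := by
  have key : ∀ t : ℝ, 0 ≤ L (x ^ 2) * (t * t) + 2 * L (x * y) * t + L (y ^ 2) := by
    intro t
    have h0 := hL (t • x + y)
    have expand : (t • x + y) ^ 2 = (t * t) • x ^ 2 + ((2 * t) • (x * y) + y ^ 2) := by
      simp only [Algebra.smul_def, map_mul, map_ofNat]
      ring
    rw [expand, map_add, map_add, L.map_smul, L.map_smul, smul_eq_mul, smul_eq_mul] at h0
    linarith
  have hd := discrim_le_zero key
  rw [discrim] at hd
  nlinarith [hd]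

lemma mv_poly_dense {d : ℕ} {K : Set (Fin d → ℝ)} (hK : IsCompact K)
    (φ : (Fin d → ℝ) → ℝ) (hφ : Continuous φ) (δ : ℝ) (hδ : 0 < δ) :
    ∃ g : MvPolynomial (Fin d) ℝ, ∀ x ∈ K, |eval x g - φ x| < δ := by
  haveI : CompactSpace K := isCompact_iff_compactSpace.mp hK
  let coords : Fin d → C(K, ℝ) :=
    fun i => ⟨fun x => (x : Fin d → ℝ) i, (continuous_apply i).comp continuous_subtype_val⟩
  let A : Subalgebra ℝ C(K, ℝ) := (MvPolynomial.aeval coords).range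
  have evalA : ∀ (g : MvPolynomial (Fin d) ℝ) (z : K),
      (MvPolynomial.aeval coords g) z = eval (z : Fin d → ℝ) g := by
    intro g z
    induction g using MvPolynomial.induction_on with
    | C a => simp [coords]
    | add p r hp hr => simp [hp, hr]
    | mul_X p i hp => simp [hp, coords]
  have sep : A.SeparatesPoints := by
    intro x y hxy
    have hne : (x : Fin d → ℝ) ≠ (y : Fin d → ℝ) := Subtype.coe_ne_coe.mpr hxy
    obtain ⟨i, hi⟩ := Function.ne_iff.mp hne
    exact ⟨(coords i : K → ℝ), ⟨coords i, ⟨⟨MvPolynomial.X i, by simp⟩, rfl⟩⟩, hi⟩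
  obtain ⟨g0, hg0⟩ := ContinuousMap.exists_mem_subalgebra_near_continuous_of_separatesPoints
    A sep (fun z : K => φ z) (hφ.comp continuous_subtype_val) δ hδ
  obtain ⟨g, hg⟩ := g0.2
  refine ⟨g, fun x hx => ?_⟩
  have h := hg0 ⟨x, hx⟩
  have h2 : ((g0 : C(K, ℝ)) : K → ℝ) ⟨x, hx⟩ = eval x g := by
    rw [← hg]
    exact evalA g ⟨x, hx⟩
  rw [h2] at h
  simpa using h

lemma approx_lemma {d : ℕ} {K : Set (Fin d → ℝ)} (hK : IsCompact K)
    (ν : Measure (Fin d → ℝ)) [IsFiniteMeasure ν]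
    (ψ : (Fin d → ℝ) → ℝ) (hψ : MemLp ψ 2 (ν.restrict K)) (ε : ℝ) (hε : 0 < ε) :
    ∃ g : MvPolynomial (Fin d) ℝ,
      eLpNorm (fun x => ψ x - eval x g) 2 (ν.restrict K) ≤ ENNReal.ofReal ε := by
  set μ := ν.restrict K with hμdef
  have hKm : MeasurableSet K := hK.measurableSet
  obtain ⟨φ, hφ1, hφ2⟩ := hψ.exists_boundedContinuous_eLpNorm_sub_le
    (by norm_num : (2 : ℝ≥0∞) ≠ ∞)
    (ε := ENNReal.ofReal (ε / 2)) (ENNReal.ofReal_pos.mpr (by positivity)).ne'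
  set c : ℝ≥0∞ := (μ Set.univ) ^ (2 : ℝ≥0∞).toReal⁻¹ with hc
  have hcne : c ≠ ∞ := by
    refine ENNReal.rpow_ne_top_of_nonneg (by norm_num) (measure_ne_top μ _)
  set δ : ℝ := (ε / 2) / (c.toReal + 1) with hδdef
  have hcpos : 0 < c.toReal + 1 := by positivity
  have hδ : 0 < δ := by positivity
  obtain ⟨g, hg⟩ := mv_poly_dense hK φ φ.continuous δ hδ
  refine ⟨g, ?_⟩
  have bound1 : eLpNorm (fun x => φ x - eval x g) 2 μ ≤ c * ENNReal.ofReal δ := by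
    refine eLpNorm_le_of_ae_bound ?_
    filter_upwards [ae_restrict_mem hKm] with x hx
    rw [Real.norm_eq_abs, abs_sub_comm]
    exact (hg x hx).le
  have bound1' : c * ENNReal.ofReal δ ≤ ENNReal.ofReal (ε / 2) := by
    have h1 : c ≤ ENNReal.ofReal (c.toReal + 1) := by
      conv_lhs => rw [← ENNReal.ofReal_toReal hcne]
      exact ENNReal.ofReal_le_ofReal (by linarith)
    calc c * ENNReal.ofReal δ ≤ ENNReal.ofReal (c.toReal + 1) * ENNReal.ofReal δ := by gcongr
      _ = ENNReal.ofReal ((c.toReal + 1) * δ) := by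
          rw [← ENNReal.ofReal_mul (by positivity)]
      _ = ENNReal.ofReal (ε / 2) := by
          congr 1
          rw [hδdef]
          field_simp
  have triangle : eLpNorm (fun x => ψ x - eval x g) 2 μ
      ≤ eLpNorm (fun x => ψ x - φ x) 2 μ + eLpNorm (fun x => φ x - eval x g) 2 μ := by
    have heq : (fun x => ψ x - eval x g)
        = (fun x => ψ x - φ x) + (fun x => φ x - eval x g) := by
      funext x
      simp only [Pi.add_apply]
      ring
    rw [heq]
    exact eLpNorm_add_le (hψ.1.sub φ.continuous.aestronglyMeasurable)
      (φ.continuous.aestronglyMeasurable.sub (continuous_eval g).aestronglyMeasurable) one_le_two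
  calc eLpNorm (fun x => ψ x - eval x g) 2 μ
      ≤ eLpNorm (fun x => ψ x - φ x) 2 μ + eLpNorm (fun x => φ x - eval x g) 2 μ := triangle
    _ ≤ ENNReal.ofReal (ε / 2) + ENNReal.ofReal (ε / 2) := by
        refine add_le_add ?_ (bound1.trans bound1')
        exact hφ1
    _ = ENNReal.ofReal ε := by
        rw [← ENNReal.ofReal_add (by positivity) (by positivity)]
        norm_num

lemma tendsto_toLp_of_bound {α : Type*} [MeasurableSpace α] (μ : Measure α)
    (ψ : α → ℝ) (hψ : MemLp ψ 2 μ) (g : ℕ → α → ℝ) (hg : ∀ n, MemLp (g n) 2 μ)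
    (b : ℕ → ℝ) (hb0 : ∀ n, 0 ≤ b n) (hb : Tendsto b atTop (nhds 0))
    (h : ∀ n, eLpNorm (fun x => ψ x - g n x) 2 μ ≤ ENNReal.ofReal (b n)) :
    Tendsto (fun n => (hg n).toLp (g n)) atTop (nhds (hψ.toLp ψ)) := by
  rw [tendsto_iff_norm_sub_tendsto_zero]
  refine squeeze_zero (fun n => norm_nonneg _) (fun n => ?_) hb
  rw [← MemLp.toLp_sub, Lp.norm_toLp]
  have h' : eLpNorm (fun x => g n x - ψ x) 2 μ ≤ ENNReal.ofReal (b n) := by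
    rw [show (fun x => g n x - ψ x) = (g n) - ψ from rfl, eLpNorm_sub_comm]
    exact h n
  calc (eLpNorm (g n - ψ) 2 μ).toReal ≤ (ENNReal.ofReal (b n)).toReal :=
        ENNReal.toReal_mono ENNReal.ofReal_ne_top h'
    _ = b n := ENNReal.toReal_ofReal (hb0 n)

lemma mul_eLpNorm_bound {α : Type*} [MeasurableSpace α] (μ : Measure α)
    (q ψ g : α → ℝ) (M : ℝ) (hM : 0 ≤ M) (hq : ∀ᵐ x ∂μ, ‖q x‖ ≤ M)
    (c : ℝ≥0∞) (h : eLpNorm (fun x => ψ x - g x) 2 μ ≤ c) :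
    eLpNorm (fun x => q x * ψ x - q x * g x) 2 μ ≤ ENNReal.ofReal M * c := by
  have h1 : eLpNorm (fun x => q x * ψ x - q x * g x) 2 μ
      ≤ eLpNorm (M • (fun x => ψ x - g x)) 2 μ := by
    refine eLpNorm_mono_ae ?_
    filter_upwards [hq] with x hx
    have : q x * ψ x - q x * g x = q x * (ψ x - g x) := by ring
    rw [this, Pi.smul_apply, smul_eq_mul, norm_mul, norm_mul]
    exact mul_le_mul_of_nonneg_right (hx.trans (le_abs_self M)) (norm_nonneg _)
  refine h1.trans ?_
  rw [eLpNorm_const_smul]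
  calc (‖M‖₊ : ℝ≥0∞) * eLpNorm (fun x => ψ x - g x) 2 μ
      ≤ (‖M‖₊ : ℝ≥0∞) * c := by gcongr
    _ = ENNReal.ofReal M * c := by
        congr 1
        rw [ENNReal.ofReal, Real.toNNReal_eq_nnnorm_of_nonneg hM]

theorem cauchy_schwarz_L2_extension (d : ℕ)
    (L : MvPolynomial (Fin d) ℝ →ₗ[ℝ] ℝ)
    (hL : ∀ p : MvPolynomial (Fin d) ℝ, 0 ≤ L (p ^ 2))
    (q : MvPolynomial (Fin d) ℝ)
    (K : Set (Fin d → ℝ)) (hK : IsCompact K)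
    (ν : Measure (Fin d → ℝ)) [IsFiniteMeasure ν]
    (hrep : ∀ f : MvPolynomial (Fin d) ℝ,
      L (q * f) = ∫ x in K, eval x f ∂ν) :
    ∀ (f : MvPolynomial (Fin d) ℝ) (ψ : (Fin d → ℝ) → ℝ),
      MemLp ψ 2 (ν.restrict K) →
      (∫ x in K, eval x f * ψ x ∂ν) ^ 2 ≤
        (∫ x in K, eval x q * (ψ x) ^ 2 ∂ν) * L (f ^ 2) := by
  intro f ψ hψ
  set μ := ν.restrict K with hμdef
  have hKm : MeasurableSet K := hK.measurableSet
  -- the polynomial case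
  have polyCS : ∀ g : MvPolynomial (Fin d) ℝ,
      (∫ x, eval x f * eval x g ∂μ) ^ 2 ≤
        (∫ x, eval x q * (eval x g) ^ 2 ∂μ) * L (f ^ 2) := by
    intro g
    have h1 : (∫ x, eval x f * eval x g ∂μ) = L (q * (f * g)) := by
      rw [hμdef, hrep (f * g)]
      simp_rw [map_mul]
      rfl
    have h2 : (∫ x, eval x q * (eval x g) ^ 2 ∂μ) = L (q * (q * g ^ 2)) := by
      rw [hμdef, hrep (q * g ^ 2)]
      simp_rw [map_mul, map_pow]
      rfl
    rw [h1, h2]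
    have e1 : q * (f * g) = (q * g) * f := by ring
    have e2 : q * (q * g ^ 2) = (q * g) ^ 2 := by ring
    rw [e1, e2]
    exact linmap_cauchy_schwarz L hL (q * g) f
  -- memℒp facts
  have memPoly : ∀ p : MvPolynomial (Fin d) ℝ, MemLp (fun x => eval x p) 2 μ := by
    intro p
    obtain ⟨M, hM⟩ := hK.exists_bound_of_continuousOn (MvPolynomial.continuous_eval p).continuousOn
    exact MemLp.of_bound (MvPolynomial.continuous_eval p).aestronglyMeasurable M
      (by filter_upwards [ae_restrict_mem hKm] with x hx using hM x hx)
  obtain ⟨Mq0, hMq0⟩ := hK.exists_bound_of_continuousOn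
    (MvPolynomial.continuous_eval q).continuousOn
  set Mq : ℝ := max Mq0 0 with hMqdef
  have hMq_nonneg : 0 ≤ Mq := le_max_right _ _
  have hq_ae : ∀ᵐ x ∂μ, ‖eval x q‖ ≤ Mq := by
    filter_upwards [ae_restrict_mem hKm] with x hx using (hMq0 x hx).trans (le_max_left _ _)
  have memq_mul : ∀ {φ : (Fin d → ℝ) → ℝ}, MemLp φ 2 μ →
      MemLp (fun x => eval x q * φ x) 2 μ := by
    intro φ hφ
    refine MemLp.of_le (hφ.const_mul Mq)
      ((MvPolynomial.continuous_eval q).aestronglyMeasurable.mul hφ.1) ?_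
    filter_upwards [hq_ae] with x hx
    rw [norm_mul, norm_mul]
    exact mul_le_mul_of_nonneg_right (hx.trans (le_abs_self Mq)) (norm_nonneg _)
  -- approximation of ψ by polynomials in L2
  have approx : ∀ n : ℕ, ∃ g : MvPolynomial (Fin d) ℝ,
      eLpNorm (fun x => ψ x - eval x g) 2 μ ≤ ENNReal.ofReal (1 / (n + 1)) := by
    intro n
    exact approx_lemma hK ν ψ hψ (1 / (n + 1)) (by positivity)
  choose gs hgs using approx
  -- Lp elements
  set Φ : Lp ℝ 2 μ := hψ.toLp ψ with hΦ
  set F : Lp ℝ 2 μ := (memPoly f).toLp _ with hF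
  set Φn : ℕ → Lp ℝ 2 μ := fun n => (memPoly (gs n)).toLp _ with hΦn
  set Qψ : Lp ℝ 2 μ := (memq_mul hψ).toLp (fun x => eval x q * ψ x) with hQψ
  set Qn : ℕ → Lp ℝ 2 μ :=
    fun n => (memq_mul (memPoly (gs n))).toLp (fun x => eval x q * eval x (gs n)) with hQn
  have hconv1 : Tendsto Φn atTop (nhds Φ) := by
    exact tendsto_toLp_of_bound μ ψ hψ _ (fun n => memPoly (gs n)) (fun n => 1 / (n + 1))
      (fun n => by positivity) tendsto_one_div_add_atTop_nhds_zero_nat hgs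
  have hconv2 : Tendsto Qn atTop (nhds Qψ) := by
    refine tendsto_toLp_of_bound μ _ (memq_mul hψ) _ (fun n => memq_mul (memPoly (gs n)))
      (fun n => Mq * (1 / (n + 1))) (fun n => by positivity) ?_ ?_
    · simpa using tendsto_one_div_add_atTop_nhds_zero_nat.const_mul Mq
    · intro n
      rw [ENNReal.ofReal_mul hMq_nonneg]
      exact mul_eLpNorm_bound μ _ _ _ Mq hMq_nonneg hq_ae _ (hgs n)
  have inner_eq : ∀ (u v : (Fin d → ℝ) → ℝ) (hu : MemLp u 2 μ) (hv : MemLp v 2 μ),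
      (inner ℝ (hu.toLp u) (hv.toLp v) : ℝ) = ∫ x, u x * v x ∂μ := by
    intro u v hu hv
    rw [MeasureTheory.L2.inner_def]
    refine integral_congr_ae ?_
    filter_upwards [hu.coeFn_toLp, hv.coeFn_toLp] with x hx hy
    rw [hx, hy]
    simp [RCLike.inner_apply, mul_comm]
  have key : ∀ n, (inner ℝ F (Φn n) : ℝ) ^ 2 ≤ (inner ℝ (Qn n) (Φn n) : ℝ) * L (f ^ 2) := by
    intro n
    rw [hF, hΦn, hQn, inner_eq, inner_eq]
    have : (∫ x, (eval x q * eval x (gs n)) * eval x (gs n) ∂μ)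
        = ∫ x, eval x q * (eval x (gs n)) ^ 2 ∂μ := by
      congr 1
      funext x
      ring
    rw [this]
    exact polyCS (gs n)
  have hlim1 : Tendsto (fun n => (inner ℝ F (Φn n) : ℝ) ^ 2) atTop
      (nhds ((inner ℝ F Φ : ℝ) ^ 2)) :=
    (tendsto_const_nhds.inner hconv1).pow 2
  have hlim2 : Tendsto (fun n => (inner ℝ (Qn n) (Φn n) : ℝ) * L (f ^ 2)) atTop
      (nhds ((inner ℝ Qψ Φ : ℝ) * L (f ^ 2))) :=
    (hconv2.inner hconv1).mul_const _
  have final : (inner ℝ F Φ : ℝ) ^ 2 ≤ (inner ℝ Qψ Φ : ℝ) * L (f ^ 2) :=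
    le_of_tendsto_of_tendsto' hlim1 hlim2 key
  rw [hF, hΦ, hQψ, inner_eq, inner_eq] at final
  have : (∫ x, (eval x q * ψ x) * ψ x ∂μ) = ∫ x, eval x q * (ψ x) ^ 2 ∂μ := by
    congr 1
    funext x
    ring
  rw [this] at final
  exact final
end

section
/- Let L : ℝ[x₁,…,x_d] → ℝ be linear and nonnegative on squares, q a polynomial, ν a finite positive Borel measure on a compact set K with L(qf) = ∫_K f dν for all polynomials f, and suppose L is nonzero. Then ν({x ∈ K : q(x) ≤ 0}) = 0. -/
open MeasureTheory MvPolynomial Filter Metric Set Topology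

private lemma L_cauchy_schwarz {d : ℕ} (L : MvPolynomial (Fin d) ℝ →ₗ[ℝ] ℝ)
    (hL : ∀ p : MvPolynomial (Fin d) ℝ, 0 ≤ L (p ^ 2)) (f g : MvPolynomial (Fin d) ℝ) :
    L (f * g) ^ 2 ≤ L (f ^ 2) * L (g ^ 2) := by
  have key : ∀ t : ℝ, 0 ≤ L (g ^ 2) * (t * t) + (2 * L (f * g)) * t + L (f ^ 2) := by
    intro t
    have h := hL (t • g + f)
    have e : (t • g + f) ^ 2 = (t * t) • g ^ 2 + (2 * t) • (f * g) + f ^ 2 := by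
      simp only [smul_eq_C_mul, map_mul, map_ofNat]
      ring
    rw [e] at h
    simp only [map_add, _root_.map_smul, smul_eq_mul] at h
    nlinarith [h]
  have h2 := discrim_le_zero key
  rw [discrim] at h2
  nlinarith [h2]

private lemma poly_approx {d : ℕ} {K : Set (Fin d → ℝ)} (hK : IsCompact K)
    {g : (Fin d → ℝ) → ℝ} (hg : Continuous g) {ε : ℝ} (hε : 0 < ε) :
    ∃ p : MvPolynomial (Fin d) ℝ, ∀ x ∈ K, |eval x p - g x| < ε := by
  haveI : CompactSpace K := isCompact_iff_compactSpace.mp hK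
  set c : Fin d → C(K, ℝ) := fun i =>
    ⟨fun x => (x : Fin d → ℝ) i, (continuous_apply i).comp continuous_subtype_val⟩ with hc
  have haev : ∀ (p : MvPolynomial (Fin d) ℝ) (z : K),
      (aeval c p : C(K, ℝ)) z = eval (z : Fin d → ℝ) p := by
    intro p z
    induction p using MvPolynomial.induction_on with
    | C a => simp [c]
    | add p q hp hq => simp [hp, hq]
    | mul_X p i hp => simp [hp, c]
  have sep : ((aeval c : MvPolynomial (Fin d) ℝ →ₐ[ℝ] C(K, ℝ)).range).SeparatesPoints := by
    intro x y hxy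
    obtain ⟨i, hi⟩ := Function.ne_iff.mp (fun h => hxy (Subtype.ext h))
    refine ⟨(c i : K → ℝ), ⟨c i, ⟨⟨X i, by simp⟩, rfl⟩⟩, ?_⟩
    simpa [c] using hi
  obtain ⟨⟨f, hf⟩, hb⟩ := ContinuousMap.exists_mem_subalgebra_near_continuous_of_separatesPoints
    _ sep (fun x : K => g x) (hg.comp continuous_subtype_val) ε hε
  obtain ⟨p, hp⟩ := hf
  refine ⟨p, fun x hx => ?_⟩
  have hfeq : f ⟨x, hx⟩ = eval x p := by
    rw [← hp]; exact haev p ⟨x, hx⟩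
  have h1 := hb ⟨x, hx⟩
  simpa [Real.norm_eq_abs, hfeq] using h1

private lemma abs_sq_diff_bound {u v w M G δ : ℝ} (hw : |w| ≤ M) (hv : |v| ≤ G)
    (huv : |u - v| ≤ δ) (hδ : δ ≤ 1) :
    |w * u ^ 2 - w * v ^ 2| ≤ M * (2 * G + 1) * δ := by
  have habs : |u + v| ≤ 2 * G + 1 := by
    calc |u + v| = |(u - v) + 2 * v| := by ring_nf
      _ ≤ |u - v| + |2 * v| := abs_add_le _ _
      _ ≤ δ + 2 * G := by
          rw [abs_mul]
          simp only [abs_two]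
          nlinarith
      _ ≤ 2 * G + 1 := by linarith
  calc |w * u ^ 2 - w * v ^ 2| = |w| * (|u - v| * |u + v|) := by
        rw [show w * u ^ 2 - w * v ^ 2 = w * ((u - v) * (u + v)) by ring, abs_mul, abs_mul]
    _ ≤ M * (δ * (2 * G + 1)) := by
        have hMnn : 0 ≤ M := le_trans (abs_nonneg w) hw
        have hδnn : 0 ≤ δ := le_trans (abs_nonneg _) huv
        have i1 : |u - v| * |u + v| ≤ δ * (2 * G + 1) :=
          mul_le_mul huv habs (abs_nonneg _) hδnn
        exact mul_le_mul hw i1 (mul_nonneg (abs_nonneg _) (abs_nonneg _)) hMnn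
    _ = M * (2 * G + 1) * δ := by ring

theorem representing_measure_vanishes_on_nonpositivity_set (d : ℕ)
    (L : MvPolynomial (Fin d) ℝ →ₗ[ℝ] ℝ) (hL0 : L ≠ 0)
    (hL : ∀ p : MvPolynomial (Fin d) ℝ, 0 ≤ L (p ^ 2))
    (q : MvPolynomial (Fin d) ℝ)
    (K : Set (Fin d → ℝ)) (hK : IsCompact K)
    (ν : Measure (Fin d → ℝ)) [IsFiniteMeasure ν]
    (hrep : ∀ f : MvPolynomial (Fin d) ℝ,
      L (q * f) = ∫ x in K, eval x f ∂ν) :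
    ν {x ∈ K | eval x q ≤ 0} = 0 := by
  classical
  set A : Set (Fin d → ℝ) := {x ∈ K | eval x q ≤ 0} with hA
  have hKc : IsClosed K := hK.isClosed
  have hAclosed : IsClosed A := by
    have : A = K ∩ {x | eval x q ≤ 0} := rfl
    rw [this]
    exact hKc.inter (isClosed_le (MvPolynomial.continuous_eval q) continuous_const)
  have hKm : MeasurableSet K := hKc.measurableSet
  have hAm : MeasurableSet A := hAclosed.measurableSet
  have hAK : A ⊆ K := fun x hx => hx.1
  rcases Set.eq_empty_or_nonempty A with hAe | hAne
  · rw [hAe]; simp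
  -- bounds on q
  obtain ⟨Mq, hMq⟩ := hK.exists_bound_of_continuousOn (MvPolynomial.continuous_eval q).continuousOn
  set M : ℝ := max Mq 0 with hM0
  have hM : ∀ x ∈ K, |eval x q| ≤ M := fun x hx =>
    le_trans (by simpa using hMq x hx) (le_max_left _ _)
  have hMnn : 0 ≤ M := le_max_right _ _
  have hL1 : 0 ≤ L 1 := by simpa using hL 1
  have hint : ∀ f : (Fin d → ℝ) → ℝ, Continuous f → IntegrableOn f K ν :=
    fun f hf => hf.continuousOn.integrableOn_compact hK
  set R : ℝ := (ν K).toReal with hR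
  -- key inequality for continuous functions
  have key : ∀ g : (Fin d → ℝ) → ℝ, Continuous g →
      (∫ x in K, g x ∂ν) ^ 2 ≤ L 1 * ∫ x in K, eval x q * g x ^ 2 ∂ν := by
    intro g hg
    obtain ⟨G0, hG0⟩ := hK.exists_bound_of_continuousOn hg.continuousOn
    set G : ℝ := max G0 0 with hGdef
    have hG : ∀ x ∈ K, |g x| ≤ G := fun x hx =>
      le_trans (by simpa using hG0 x hx) (le_max_left _ _)
    have hGnn : 0 ≤ G := le_max_right _ _
    have hex : ∀ n : ℕ, ∃ p : MvPolynomial (Fin d) ℝ,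
        ∀ x ∈ K, |eval x p - g x| < 1 / (n + 1) :=
      fun n => poly_approx hK hg (by positivity)
    choose p hp using hex
    have hn1 : ∀ n : ℕ, (0:ℝ) < 1 / (n + 1) := fun n => by positivity
    have hn2 : ∀ n : ℕ, (1:ℝ) / (n + 1) ≤ 1 := fun n => by
      rw [div_le_one (by positivity)]; linarith [Nat.cast_nonneg (α := ℝ) n]
    -- step inequality
    have step : ∀ n, (∫ x in K, eval x (p n) ∂ν) ^ 2 ≤
        L 1 * ∫ x in K, eval x q * eval x (p n) ^ 2 ∂ν := by
      intro n
      have h1 : (∫ x in K, eval x (p n) ∂ν) = L (q * p n) := (hrep (p n)).symm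
      have h2 : L ((q * p n) ^ 2) = ∫ x in K, eval x q * eval x (p n) ^ 2 ∂ν := by
        have e : (q * p n) ^ 2 = q * (q * p n ^ 2) := by ring
        rw [e, hrep (q * p n ^ 2)]
        simp only [eval_mul, eval_pow]
      have hcs := L_cauchy_schwarz L hL 1 (q * p n)
      rw [one_mul, one_pow] at hcs
      rw [h1, ← h2]
      exact hcs
    -- limit of the linear terms
    have lim_a : Tendsto (fun n => ∫ x in K, eval x (p n) ∂ν) atTop
        (𝓝 (∫ x in K, g x ∂ν)) := by
      rw [tendsto_iff_dist_tendsto_zero]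
      refine squeeze_zero (g := fun n : ℕ => 1 / (n + 1) * R) (fun n => dist_nonneg)
        (fun n => ?_) ?_
      · rw [dist_eq_norm,
          ← integral_sub (hint _ (MvPolynomial.continuous_eval (p n))) (hint _ hg)]
        have hb : ∀ᵐ x ∂ν.restrict K, ‖eval x (p n) - g x‖ ≤ 1 / (n + 1) := by
          filter_upwards [ae_restrict_mem hKm] with x hx
          simpa [Real.norm_eq_abs] using (hp n x hx).le
        have := norm_integral_le_of_norm_le_const hb
        rw [hR]
        simpa [Measure.restrict_apply_univ, measureReal_def] using this
      · simpa using tendsto_one_div_add_atTop_nhds_zero_nat.mul_const R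
    -- limit of the quadratic terms
    have lim_b : Tendsto (fun n => ∫ x in K, eval x q * eval x (p n) ^ 2 ∂ν) atTop
        (𝓝 (∫ x in K, eval x q * g x ^ 2 ∂ν)) := by
      rw [tendsto_iff_dist_tendsto_zero]
      refine squeeze_zero (g := fun n : ℕ => M * (2 * G + 1) * (1 / (n + 1)) * R)
        (fun n => dist_nonneg) (fun n => ?_) ?_
      · have hcont1 : Continuous fun x => eval x q * eval x (p n) ^ 2 :=
          (MvPolynomial.continuous_eval q).mul ((MvPolynomial.continuous_eval (p n)).pow 2)
        have hcont2 : Continuous fun x => eval x q * g x ^ 2 :=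
          (MvPolynomial.continuous_eval q).mul (hg.pow 2)
        rw [dist_eq_norm, ← integral_sub (hint _ hcont1) (hint _ hcont2)]
        have hb : ∀ᵐ x ∂ν.restrict K,
            ‖eval x q * eval x (p n) ^ 2 - eval x q * g x ^ 2‖ ≤ M * (2 * G + 1) * (1 / (n + 1)) := by
          filter_upwards [ae_restrict_mem hKm] with x hx
          rw [Real.norm_eq_abs]
          exact abs_sq_diff_bound (hM x hx) (hG x hx) (hp n x hx).le (hn2 n)
        have := norm_integral_le_of_norm_le_const hb
        rw [hR]
        simpa [Measure.restrict_apply_univ, measureReal_def] using this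
      · simpa using (tendsto_one_div_add_atTop_nhds_zero_nat.const_mul
          (M * (2 * G + 1))).mul_const R
    exact le_of_tendsto_of_tendsto' (lim_a.pow 2) (lim_b.const_mul (L 1)) step
  -- cutoff functions converging to the indicator of A
  set g : ℕ → (Fin d → ℝ) → ℝ := fun n x => max 0 (1 - n * infDist x A) with hgdef
  have hgcont : ∀ n, Continuous (g n) := fun n =>
    continuous_const.max (continuous_const.sub
      (continuous_const.mul (Metric.continuous_infDist_pt A)))
  have hg01 : ∀ n x, 0 ≤ g n x ∧ g n x ≤ 1 := by
    intro n x
    refine ⟨le_max_left _ _, max_le zero_le_one ?_⟩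
    have h1 : 0 ≤ (n : ℝ) * infDist x A :=
      mul_nonneg (Nat.cast_nonneg n) infDist_nonneg
    linarith
  have hglim : ∀ x, Tendsto (fun n => g n x) atTop
      (𝓝 (A.indicator (1 : (Fin d → ℝ) → ℝ) x)) := by
    intro x
    by_cases hx : x ∈ A
    · have h1 : ∀ n, g n x = 1 := fun n => by
        simp [hgdef, infDist_zero_of_mem hx]
      simpa [Set.indicator_of_mem hx, h1] using tendsto_const_nhds (α := ℝ) (f := atTop (α := ℕ))
    · have hpos : 0 < infDist x A := (hAclosed.notMem_iff_infDist_pos hAne).mp hx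
      rw [Set.indicator_of_notMem hx]
      have ht : Tendsto (fun n : ℕ => (n : ℝ) * infDist x A) atTop atTop :=
        tendsto_natCast_atTop_atTop.atTop_mul_const hpos
      have hev : ∀ᶠ n : ℕ in atTop, g n x = 0 := by
        filter_upwards [ht.eventually_ge_atTop 1] with n hn
        simp only [hgdef]
        rw [max_eq_left (by linarith)]
      exact Tendsto.congr' (hev.mono fun n h => h.symm) tendsto_const_nhds
  -- dominated convergence
  have lim1 : Tendsto (fun n => ∫ x in K, g n x ∂ν) atTop
      (𝓝 (∫ x in K, A.indicator (1 : (Fin d → ℝ) → ℝ) x ∂ν)) := by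
    refine tendsto_integral_of_dominated_convergence (fun _ => (1 : ℝ))
      (fun n => (hgcont n).aestronglyMeasurable) (integrable_const 1) (fun n => ?_) ?_
    · filter_upwards with x
      rw [Real.norm_eq_abs, abs_of_nonneg (hg01 n x).1]
      exact (hg01 n x).2
    · filter_upwards with x
      exact hglim x
  have lim2 : Tendsto (fun n => ∫ x in K, eval x q * g n x ^ 2 ∂ν) atTop
      (𝓝 (∫ x in K, eval x q * A.indicator (1 : (Fin d → ℝ) → ℝ) x ∂ν)) := by
    refine tendsto_integral_of_dominated_convergence (fun x => |eval x q|)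
      (fun n => ((MvPolynomial.continuous_eval q).mul ((hgcont n).pow 2)).aestronglyMeasurable)
      ((hint _ (MvPolynomial.continuous_eval q)).abs) (fun n => ?_) ?_
    · filter_upwards with x
      rw [Real.norm_eq_abs, abs_mul]
      have h1 : |g n x ^ 2| ≤ 1 := by
        rw [abs_of_nonneg (sq_nonneg _)]
        nlinarith [(hg01 n x).1, (hg01 n x).2]
      exact mul_le_of_le_one_right (abs_nonneg _) h1
    · filter_upwards with x
      have h2 : (A.indicator (1 : (Fin d → ℝ) → ℝ) x) ^ 2
          = A.indicator (1 : (Fin d → ℝ) → ℝ) x := by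
        by_cases hx : x ∈ A <;> simp [hx]
      simpa [h2] using ((hglim x).pow 2).const_mul (eval x q)
  have main : (∫ x in K, A.indicator (1 : (Fin d → ℝ) → ℝ) x ∂ν) ^ 2 ≤
      L 1 * ∫ x in K, eval x q * A.indicator (1 : (Fin d → ℝ) → ℝ) x ∂ν :=
    le_of_tendsto_of_tendsto' (lim1.pow 2) (lim2.const_mul (L 1))
      (fun n => key (g n) (hgcont n))
  have hind : (∫ x in K, A.indicator (1 : (Fin d → ℝ) → ℝ) x ∂ν) = (ν A).toReal := by
    rw [integral_indicator_one hAm, measureReal_def, Measure.restrict_apply hAm,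
      Set.inter_eq_self_of_subset_left hAK]
  have hneg : (∫ x in K, eval x q * A.indicator (1 : (Fin d → ℝ) → ℝ) x ∂ν) ≤ 0 := by
    apply integral_nonpos
    intro x
    by_cases hx : x ∈ A
    · have := hx.2
      simp only [Set.indicator_of_mem hx, Pi.one_apply, mul_one, Pi.zero_apply]
      exact this
    · simp [Set.indicator_of_notMem hx]
  have hfin : ((ν A).toReal) ^ 2 ≤ 0 := by
    rw [← hind]
    calc (∫ x in K, A.indicator (1 : (Fin d → ℝ) → ℝ) x ∂ν) ^ 2 ≤
        L 1 * ∫ x in K, eval x q * A.indicator (1 : (Fin d → ℝ) → ℝ) x ∂ν := main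
      _ ≤ L 1 * 0 := mul_le_mul_of_nonneg_left hneg hL1
      _ = 0 := mul_zero _
  have h0 : (ν A).toReal = 0 := by
    have h2 : (ν A).toReal ^ 2 = 0 := le_antisymm hfin (sq_nonneg _)
    exact pow_eq_zero_iff two_ne_zero |>.mp h2
  rcases (ENNReal.toReal_eq_zero_iff _).mp h0 with h | h
  · exact h
  · exact absurd h (measure_ne_top ν A)
end

section
/- Let L : ℝ[x₁,…,x_d] → ℝ be linear and nonnegative on squares, q a polynomial, ν a finite positive Borel measure on a compact set K with L(qf) = ∫_K f dν for all polynomials f, and assume ν({q ≤ 0}) = 0. Then the function 1/q is ν-integrable, and moreover ∫_K (f²/q) dν ≤ L(f²) for every polynomial f. -/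
open MeasureTheory MvPolynomial Filter Finset

set_option maxHeartbeats 1000000

private lemma cs_aux {d : ℕ} (L : MvPolynomial (Fin d) ℝ →ₗ[ℝ] ℝ)
    (hL : ∀ p : MvPolynomial (Fin d) ℝ, 0 ≤ L (p ^ 2)) (a b : MvPolynomial (Fin d) ℝ) :
    L (a * b) ^ 2 ≤ L (a ^ 2) * L (b ^ 2) := by
  have h : ∀ t : ℝ, 0 ≤ L (a ^ 2) * (t * t) + (2 * L (a * b)) * t + L (b ^ 2) := by
    intro t
    have e : (t • a + b) ^ 2 = (t * t) • a ^ 2 + (2 * t) • (a * b) + b ^ 2 := by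
      simp only [smul_eq_C_mul, map_mul, map_ofNat]
      ring
    have := hL (t • a + b)
    rw [e] at this
    simp only [map_add, LinearMap.map_smul, smul_eq_mul] at this
    linarith
  have := discrim_le_zero h
  rw [discrim] at this
  nlinarith

private lemma key_ineq {d : ℕ} (L : MvPolynomial (Fin d) ℝ →ₗ[ℝ] ℝ)
    (hL : ∀ p : MvPolynomial (Fin d) ℝ, 0 ≤ L (p ^ 2))
    (q : MvPolynomial (Fin d) ℝ) (K : Set (Fin d → ℝ))
    (ν : Measure (Fin d → ℝ))
    (hrep : ∀ f : MvPolynomial (Fin d) ℝ, L (q * f) = ∫ x in K, eval x f ∂ν)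
    (f p : MvPolynomial (Fin d) ℝ) :
    (∫ x in K, eval x f * eval x p ∂ν) ^ 2
      ≤ L (f ^ 2) * ∫ x in K, eval x q * (eval x p) ^ 2 ∂ν := by
  have h1 : ∫ x in K, eval x f * eval x p ∂ν = L (q * (f * p)) := by
    rw [hrep]; simp [map_mul]
  have h2 : ∫ x in K, eval x q * (eval x p) ^ 2 ∂ν = L (q * (q * p ^ 2)) := by
    rw [hrep]; simp [map_mul, map_pow]
  rw [h1, h2]
  have e1 : q * (f * p) = f * (q * p) := by ring
  have e2 : q * (q * p ^ 2) = (q * p) ^ 2 := by ring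
  rw [e1, e2]
  exact cs_aux L hL f (q * p)

private lemma stepA {d : ℕ} (L : MvPolynomial (Fin d) ℝ →ₗ[ℝ] ℝ)
    (hL : ∀ p : MvPolynomial (Fin d) ℝ, 0 ≤ L (p ^ 2))
    (q : MvPolynomial (Fin d) ℝ) (K : Set (Fin d → ℝ)) (hK : IsCompact K)
    (ν : Measure (Fin d → ℝ)) [IsFiniteMeasure ν]
    (hrep : ∀ f : MvPolynomial (Fin d) ℝ, L (q * f) = ∫ x in K, eval x f ∂ν)
    (hae : ∀ᵐ x ∂(ν.restrict K), 0 < eval x q)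
    (f : MvPolynomial (Fin d) ℝ) {δ : ℝ} (hδ : 0 < δ) :
    ∫ x in K, (eval x f) ^ 2 * eval x q * ((eval x q) ^ 2 + δ)⁻¹ ∂ν ≤ L (f ^ 2) := by
  have hKm : MeasurableSet K := hK.isClosed.measurableSet
  obtain ⟨B0, hB0⟩ := hK.exists_bound_of_continuousOn
    (MvPolynomial.continuous_eval (p := q)).continuousOn
  obtain ⟨Bf0, hBf0⟩ := hK.exists_bound_of_continuousOn
    (MvPolynomial.continuous_eval (p := f)).continuousOn
  set B : ℝ := max B0 0 with hBdef
  have hB0' : 0 ≤ B := le_max_right _ _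
  have hqB : ∀ x ∈ K, |eval x q| ≤ B := fun x hx =>
    le_trans (by simpa [Real.norm_eq_abs] using hB0 x hx) (le_max_left _ _)
  set Bf : ℝ := max Bf0 0 with hBfdef
  have hBf0' : 0 ≤ Bf := le_max_right _ _
  have hfB : ∀ x ∈ K, |eval x f| ≤ Bf := fun x hx =>
    le_trans (by simpa [Real.norm_eq_abs] using hBf0 x hx) (le_max_left _ _)
  set M : ℝ := B ^ 2 + δ with hM
  have hM0 : 0 < M := by positivity
  set s : MvPolynomial (Fin d) ℝ := 1 - MvPolynomial.C M⁻¹ * (q ^ 2 + MvPolynomial.C δ)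
    with hs
  have hevals : ∀ x, eval x s = 1 - M⁻¹ * ((eval x q) ^ 2 + δ) := by
    intro x; simp [hs]
  have hdpos : ∀ x : Fin d → ℝ, 0 < (eval x q) ^ 2 + δ := fun x => by positivity
  have hdM : ∀ x ∈ K, (eval x q) ^ 2 + δ ≤ M := by
    intro x hx
    have h1 := hqB x hx
    have h2 : (eval x q) ^ 2 ≤ B ^ 2 := by
      nlinarith [abs_nonneg (eval x q), sq_abs (eval x q)]
    simp only [hM]; linarith
  have hs0 : ∀ x ∈ K, 0 ≤ eval x s := by
    intro x hx
    rw [hevals]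
    have h1 : M⁻¹ * ((eval x q) ^ 2 + δ) ≤ M⁻¹ * M :=
      mul_le_mul_of_nonneg_left (hdM x hx) (by positivity)
    rw [inv_mul_cancel₀ (ne_of_gt hM0)] at h1
    linarith
  have hs1 : ∀ x ∈ K, eval x s < 1 := by
    intro x hx
    rw [hevals]
    have : 0 < M⁻¹ * ((eval x q) ^ 2 + δ) := by positivity
    linarith
  set P : ℕ → MvPolynomial (Fin d) ℝ :=
    fun k => MvPolynomial.C M⁻¹ * ∑ j ∈ range k, s ^ j with hP
  have hevalP : ∀ k x, eval x (P k) = M⁻¹ * ∑ j ∈ range k, (eval x s) ^ j := by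
    intro k x; simp [hP]
  have hsum : ∀ x ∈ K, HasSum (fun j => (eval x s) ^ j) (1 - eval x s)⁻¹ :=
    fun x hx => hasSum_geometric_of_lt_one (hs0 x hx) (hs1 x hx)
  have honeminus : ∀ x, M⁻¹ * (1 - eval x s)⁻¹ = ((eval x q) ^ 2 + δ)⁻¹ := by
    intro x
    have h1 : 1 - eval x s = M⁻¹ * ((eval x q) ^ 2 + δ) := by rw [hevals]; ring
    rw [h1, mul_inv, inv_inv]
    field_simp
  have hPlim : ∀ x ∈ K, Tendsto (fun k => eval x (P k)) atTop
      (nhds (((eval x q) ^ 2 + δ)⁻¹)) := by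
    intro x hx
    have h2 : Tendsto (fun k => M⁻¹ * ∑ j ∈ range k, (eval x s) ^ j) atTop
        (nhds (M⁻¹ * (1 - eval x s)⁻¹)) := (hsum x hx).tendsto_sum_nat.const_mul _
    rw [honeminus] at h2
    simpa [hevalP] using h2
  have hPbound : ∀ k, ∀ x ∈ K, 0 ≤ eval x (P k) ∧ eval x (P k) ≤ δ⁻¹ := by
    intro k x hx
    constructor
    · rw [hevalP]
      exact mul_nonneg (by positivity)
        (Finset.sum_nonneg fun j _ => pow_nonneg (hs0 x hx) j)
    · rw [hevalP]
      have h1 : ∑ j ∈ range k, (eval x s) ^ j ≤ (1 - eval x s)⁻¹ :=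
        sum_le_hasSum _ (fun j _ => pow_nonneg (hs0 x hx) j) (hsum x hx)
      have h2 : M⁻¹ * ∑ j ∈ range k, (eval x s) ^ j ≤ M⁻¹ * (1 - eval x s)⁻¹ :=
        mul_le_mul_of_nonneg_left h1 (by positivity)
      rw [honeminus] at h2
      refine h2.trans ?_
      have h3 : δ ≤ (eval x q) ^ 2 + δ := by nlinarith [sq_nonneg (eval x q)]
      exact inv_anti₀ hδ h3
  -- the two sequences of integrands
  set F : ℕ → (Fin d → ℝ) → ℝ := fun k x => eval x f * eval x (f * q * P k) with hF
  set G : ℕ → (Fin d → ℝ) → ℝ := fun k x => eval x q * (eval x (f * q * P k)) ^ 2 with hG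
  set Glim : (Fin d → ℝ) → ℝ :=
    fun x => (eval x f) ^ 2 * eval x q * ((eval x q) ^ 2 + δ)⁻¹ with hGlim
  set Hlim : (Fin d → ℝ) → ℝ :=
    fun x => eval x q * (eval x f * eval x q * ((eval x q) ^ 2 + δ)⁻¹) ^ 2 with hHlim
  have hcont : ∀ g : MvPolynomial (Fin d) ℝ, Continuous fun x => eval x g :=
    fun g => MvPolynomial.continuous_eval g
  have hcontinv : Continuous fun x : Fin d → ℝ => ((eval x q) ^ 2 + δ)⁻¹ :=
    (((hcont q).pow 2).add continuous_const).inv₀ fun x => ne_of_gt (hdpos x)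
  have haemem : ∀ᵐ x ∂(ν.restrict K), x ∈ K := ae_restrict_mem hKm
  -- dominated convergence for F
  have t1 : Tendsto (fun k => ∫ x in K, F k x ∂ν) atTop (nhds (∫ x in K, Glim x ∂ν)) := by
    apply tendsto_integral_of_dominated_convergence (fun _ => Bf * (Bf * B * δ⁻¹))
    · intro k
      exact ((hcont f).mul (hcont (f * q * P k))).aestronglyMeasurable
    · exact integrable_const _
    · intro k
      filter_upwards [haemem] with x hx
      have e : eval x (f * q * P k) = eval x f * eval x q * eval x (P k) := by
        simp [map_mul]
      simp only [hF, Real.norm_eq_abs, e]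
      obtain ⟨h3, h4⟩ := hPbound k x hx
      have h5 := hfB x hx
      have h6 := hqB x hx
      have h7 : |eval x f * (eval x f * eval x q * eval x (P k))|
          = |eval x f| * (|eval x f| * |eval x q| * |eval x (P k)|) := by
        rw [abs_mul, abs_mul, abs_mul]
      rw [h7]
      have h8 : |eval x (P k)| ≤ δ⁻¹ := by rw [abs_of_nonneg h3]; exact h4
      gcongr
    · filter_upwards [haemem] with x hx
      have h := ((hPlim x hx).const_mul ((eval x f) ^ 2 * eval x q))
      have e : ∀ k, F k x = (eval x f) ^ 2 * eval x q * eval x (P k) := by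
        intro k; simp [hF, map_mul]; ring
      simp only [e, hGlim]
      exact h
  -- dominated convergence for G
  have t2 : Tendsto (fun k => ∫ x in K, G k x ∂ν) atTop (nhds (∫ x in K, Hlim x ∂ν)) := by
    apply tendsto_integral_of_dominated_convergence (fun _ => B * (Bf * B * δ⁻¹) ^ 2)
    · intro k
      exact ((hcont q).mul ((hcont (f * q * P k)).pow 2)).aestronglyMeasurable
    · exact integrable_const _
    · intro k
      filter_upwards [haemem] with x hx
      have e : eval x (f * q * P k) = eval x f * eval x q * eval x (P k) := by
        simp [map_mul]
      simp only [hG, Real.norm_eq_abs, e]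
      obtain ⟨h3, h4⟩ := hPbound k x hx
      have h5 := hfB x hx
      have h6 := hqB x hx
      have h8 : |eval x (P k)| ≤ δ⁻¹ := by rw [abs_of_nonneg h3]; exact h4
      have h7 : |eval x q * (eval x f * eval x q * eval x (P k)) ^ 2|
          = |eval x q| * (|eval x f| * |eval x q| * |eval x (P k)|) ^ 2 := by
        rw [abs_mul, abs_pow, abs_mul, abs_mul]
      rw [h7]
      gcongr
    · filter_upwards [haemem] with x hx
      have h := (((hPlim x hx).const_mul (eval x f * eval x q)).pow 2).const_mul (eval x q)
      have e : ∀ k, G k x = eval x q * (eval x f * eval x q * eval x (P k)) ^ 2 := by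
        intro k; simp [hG, map_mul]
      simp only [e, hHlim]
      exact h
  -- pass key inequality to the limit
  have hper : ∀ k, (∫ x in K, F k x ∂ν) ^ 2 ≤ L (f ^ 2) * ∫ x in K, G k x ∂ν :=
    fun k => key_ineq L hL q K ν hrep f (f * q * P k)
  have hlimineq : (∫ x in K, Glim x ∂ν) ^ 2 ≤ L (f ^ 2) * ∫ x in K, Hlim x ∂ν :=
    le_of_tendsto_of_tendsto' (t1.pow 2) (t2.const_mul _) hper
  -- compare Hlim with Glim a.e.
  have hintG : IntegrableOn Glim K ν :=
    (((hcont f).pow 2).mul (hcont q) |>.mul hcontinv).continuousOn.integrableOn_compact hK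
  have hintH : IntegrableOn Hlim K ν :=
    ((hcont q).mul ((((hcont f).mul (hcont q)).mul hcontinv).pow 2)).continuousOn.integrableOn_compact hK
  have hHG : ∫ x in K, Hlim x ∂ν ≤ ∫ x in K, Glim x ∂ν := by
    apply integral_mono_ae hintH hintG
    filter_upwards [hae] with x hq
    have hd := hdpos x
    have e : Hlim x = Glim x * ((eval x q) ^ 2 * ((eval x q) ^ 2 + δ)⁻¹) := by
      simp only [hHlim, hGlim]; ring
    rw [e]
    have h1 : (eval x q) ^ 2 * ((eval x q) ^ 2 + δ)⁻¹ ≤ 1 := by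
      rw [← div_eq_mul_inv]
      exact div_le_one_of_le₀ (by linarith) (by positivity)
    have h2 : 0 ≤ Glim x := by
      simp only [hGlim]
      have : (0:ℝ) < ((eval x q) ^ 2 + δ)⁻¹ := by positivity
      positivity
    exact mul_le_of_le_one_right h2 h1
  have hGnonneg : 0 ≤ ∫ x in K, Glim x ∂ν := by
    apply integral_nonneg_of_ae
    filter_upwards [hae] with x hq
    simp only [hGlim]
    have : (0:ℝ) < ((eval x q) ^ 2 + δ)⁻¹ := by positivity
    positivity
  have hLf := hL f
  nlinarith [mul_le_mul_of_nonneg_left hHG hLf]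

theorem inv_q_integrable_and_bound (d : ℕ)
    (L : MvPolynomial (Fin d) ℝ →ₗ[ℝ] ℝ)
    (hL : ∀ p : MvPolynomial (Fin d) ℝ, 0 ≤ L (p ^ 2))
    (q : MvPolynomial (Fin d) ℝ)
    (K : Set (Fin d → ℝ)) (hK : IsCompact K)
    (ν : Measure (Fin d → ℝ)) [IsFiniteMeasure ν]
    (hrep : ∀ f : MvPolynomial (Fin d) ℝ,
      L (q * f) = ∫ x in K, eval x f ∂ν)
    (hnull : ν {x | eval x q ≤ 0} = 0) :
    IntegrableOn (fun x => (eval x q)⁻¹) K ν ∧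
      ∀ f : MvPolynomial (Fin d) ℝ,
        (∫ x in K, (eval x f) ^ 2 / eval x q ∂ν) ≤ L (f ^ 2) := by
  have hKm : MeasurableSet K := hK.isClosed.measurableSet
  have hae : ∀ᵐ x ∂(ν.restrict K), 0 < eval x q := by
    apply ae_restrict_of_ae
    rw [ae_iff]
    convert hnull using 2
    ext x; simp [not_lt]
  have main : ∀ f : MvPolynomial (Fin d) ℝ,
      IntegrableOn (fun x => (eval x f) ^ 2 / eval x q) K ν ∧
      (∫ x in K, (eval x f) ^ 2 / eval x q ∂ν) ≤ L (f ^ 2) := by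
    intro f
    set g : ℕ → (Fin d → ℝ) → ℝ := fun n x =>
      (eval x f) ^ 2 * eval x q * ((eval x q) ^ 2 + (1 : ℝ) / ((n : ℝ) + 1))⁻¹ with hg
    have hδ : ∀ n : ℕ, (0:ℝ) < 1 / ((n : ℝ) + 1) := fun n => by positivity
    have hA : ∀ n, ∫ x in K, g n x ∂ν ≤ L (f ^ 2) := fun n =>
      stepA L hL q K hK ν hrep hae f (hδ n)
    have hcontg : ∀ n, Continuous (g n) := by
      intro n
      refine (((MvPolynomial.continuous_eval f).pow 2).mul
        (MvPolynomial.continuous_eval q)).mul ?_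
      exact (((MvPolynomial.continuous_eval q).pow 2).add continuous_const).inv₀
        fun x => (add_pos_of_nonneg_of_pos (sq_nonneg _) (hδ n)).ne'
    have hgnonneg : ∀ n, 0 ≤ᵐ[ν.restrict K] g n := by
      intro n
      filter_upwards [hae] with x hq
      simp only [hg]
      have h1 : (0:ℝ) < ((eval x q) ^ 2 + 1 / ((n : ℝ) + 1))⁻¹ := by positivity
      positivity
    have hintg : ∀ n, IntegrableOn (g n) K ν :=
      fun n => (hcontg n).continuousOn.integrableOn_compact hK
    have hlin : ∀ n, ∫⁻ x in K, ENNReal.ofReal (g n x) ∂ν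
        = ENNReal.ofReal (∫ x in K, g n x ∂ν) :=
      fun n => (ofReal_integral_eq_lintegral_ofReal (hintg n) (hgnonneg n)).symm
    have hptwise : ∀ᵐ x ∂(ν.restrict K),
        (Monotone fun n => ENNReal.ofReal (g n x)) ∧
        (⨆ n, ENNReal.ofReal (g n x)) = ENNReal.ofReal ((eval x f) ^ 2 / eval x q) := by
      filter_upwards [hae] with x hq
      have hq2 : (0:ℝ) < (eval x q) ^ 2 := by positivity
      have hmono : Monotone fun n => g n x := by
        intro m n hmn
        simp only [hg]
        have h1 : (1:ℝ) / ((n:ℝ) + 1) ≤ 1 / ((m:ℝ) + 1) := by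
          apply one_div_le_one_div_of_le (by positivity)
          have : (m:ℝ) ≤ (n:ℝ) := Nat.cast_le.mpr hmn
          linarith
        have h2 : ((eval x q) ^ 2 + 1 / ((m:ℝ) + 1))⁻¹
            ≤ ((eval x q) ^ 2 + 1 / ((n:ℝ) + 1))⁻¹ := by
          apply inv_anti₀ (by positivity)
          linarith
        have h3 : 0 ≤ (eval x f) ^ 2 * eval x q := by positivity
        exact mul_le_mul_of_nonneg_left h2 h3
      have hlim : Tendsto (fun n => g n x) atTop
          (nhds ((eval x f) ^ 2 / eval x q)) := by
        have h0 : Tendsto (fun n : ℕ => (1:ℝ) / ((n:ℝ) + 1)) atTop (nhds 0) :=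
          tendsto_one_div_add_atTop_nhds_zero_nat
        have h1 : Tendsto (fun n : ℕ => ((eval x q) ^ 2 + (1:ℝ) / ((n:ℝ) + 1))⁻¹)
            atTop (nhds (((eval x q) ^ 2 + 0)⁻¹)) :=
          (h0.const_add _).inv₀ (by positivity)
        have h2 := h1.const_mul ((eval x f) ^ 2 * eval x q)
        have e : (eval x f) ^ 2 * eval x q * ((eval x q) ^ 2 + 0)⁻¹
            = (eval x f) ^ 2 / eval x q := by
          rw [add_zero]
          field_simp
        rw [e] at h2
        exact h2
      have hmonoE : Monotone fun n => ENNReal.ofReal (g n x) :=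
        fun m n h => ENNReal.ofReal_le_ofReal (hmono h)
      refine ⟨hmonoE, ?_⟩
      have hofr : Tendsto (fun n => ENNReal.ofReal (g n x)) atTop
          (nhds (ENNReal.ofReal ((eval x f) ^ 2 / eval x q))) :=
        (ENNReal.continuous_ofReal.tendsto _).comp hlim
      exact tendsto_nhds_unique (tendsto_atTop_iSup hmonoE) hofr
    have hsupeq : ∫⁻ x in K, ENNReal.ofReal ((eval x f) ^ 2 / eval x q) ∂ν
        = ⨆ n, ∫⁻ x in K, ENNReal.ofReal (g n x) ∂ν := by
      rw [← lintegral_iSup' (fun n => ((hcontg n).measurable.ennreal_ofReal).aemeasurable)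
        ((hptwise.mono) fun x hx => hx.1)]
      apply lintegral_congr_ae
      filter_upwards [hptwise] with x hx
      exact hx.2.symm
    have hbound : ∫⁻ x in K, ENNReal.ofReal ((eval x f) ^ 2 / eval x q) ∂ν
        ≤ ENNReal.ofReal (L (f ^ 2)) := by
      rw [hsupeq]
      refine iSup_le fun n => ?_
      rw [hlin n]
      exact ENNReal.ofReal_le_ofReal (hA n)
    have hm : AEStronglyMeasurable (fun x => (eval x f) ^ 2 / eval x q) (ν.restrict K) :=
      (((MvPolynomial.continuous_eval f).measurable.pow_const 2).div
        (MvPolynomial.continuous_eval q).measurable).aestronglyMeasurable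
    have h0 : 0 ≤ᵐ[ν.restrict K] fun x => (eval x f) ^ 2 / eval x q := by
      filter_upwards [hae] with x hq
      exact div_nonneg (sq_nonneg _) hq.le
    refine ⟨⟨hm, (hasFiniteIntegral_iff_ofReal h0).2 (lt_of_le_of_lt hbound ENNReal.ofReal_lt_top)⟩, ?_⟩
    rw [integral_eq_lintegral_of_nonneg_ae h0 hm]
    exact ENNReal.toReal_le_of_le_ofReal (hL f) hbound
  refine ⟨?_, fun f => (main f).2⟩
  have h1 := (main 1).1
  simpa [one_div] using h1
end
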